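/- Let F = (f₁,…,fₙ) : ℝⁿ → ℝⁿ be a polynomial map and let a, b be real polynomials in the variables x₁,…,xₙ. Define Φ : ℝⁿ × ℝ × ℝ → ℝⁿ × ℝ × ℝ by Φ(x,y,z) = (f₁(x) − (y + a(x))(z + b(x)), f₂(x), …, fₙ(x), y + a(x), z + b(x)). Then j(Φ)(x,y,z) = j(F)(x) for all (x,y,z), and Φ is injective if and only if F is injective, surjective if and only if F is surjective, and bijective if and only if F is bijective. -/

import Mathlib

noncomputable section

open LinearMap

def IsPolynomialMap {ι κ : Type*} (F : (ι → ℝ) → (κ → ℝ)) : Prop :=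
  ∃ p : κ → MvPolynomial ι ℝ, ∀ x i, F x i = MvPolynomial.eval x (p i)

def jdet {E : Type*} [NormedAddCommGroup E] [NormedSpace ℝ E] (F : E → E) (p : E) : ℝ :=
  LinearMap.det (fderiv ℝ F p : E →ₗ[ℝ] E)

lemma mvpoly_diff {n : ℕ} (p : MvPolynomial (Fin n) ℝ) :
    Differentiable ℝ (fun x : Fin n → ℝ => MvPolynomial.eval x p) :=
  fun x => ((AnalyticOnNhd.eval_mvPolynomial p) x (Set.mem_univ x)).differentiableAt

lemma det_shear_left' {E F : Type*} [AddCommGroup E] [Module ℝ E] [AddCommGroup F] [Module ℝ F]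
    [FiniteDimensional ℝ E] [FiniteDimensional ℝ F] (C : F →ₗ[ℝ] E) :
    LinearMap.det (LinearMap.id + (inl ℝ E F) ∘ₗ C ∘ₗ (snd ℝ E F)) = 1 := by
  set bE := Module.finBasis ℝ E
  set bF := Module.finBasis ℝ F
  rw [← LinearMap.det_toMatrix (bE.prod bF)]
  have : LinearMap.toMatrix (bE.prod bF) (bE.prod bF)
      (LinearMap.id + (inl ℝ E F) ∘ₗ C ∘ₗ (snd ℝ E F)) =
      Matrix.fromBlocks 1 (LinearMap.toMatrix bF bE C) 0 1 := by
    ext (i|i) (j|j) <;>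
      simp [LinearMap.toMatrix_apply, Matrix.fromBlocks, Module.Basis.prod_repr_inl,
        Module.Basis.prod_repr_inr, Module.Basis.prod_apply_inl_fst, Module.Basis.prod_apply_inr_fst,
        Module.Basis.prod_apply_inl_snd, Module.Basis.prod_apply_inr_snd, Matrix.one_apply,
        Finsupp.single_apply, eq_comm]
  rw [this, Matrix.det_fromBlocks_zero₂₁]
  simp

lemma det_shear_right' {E F : Type*} [AddCommGroup E] [Module ℝ E] [AddCommGroup F] [Module ℝ F]
    [FiniteDimensional ℝ E] [FiniteDimensional ℝ F] (C : E →ₗ[ℝ] F) :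
    LinearMap.det (LinearMap.id + (inr ℝ E F) ∘ₗ C ∘ₗ (fst ℝ E F)) = 1 := by
  set bE := Module.finBasis ℝ E
  set bF := Module.finBasis ℝ F
  rw [← LinearMap.det_toMatrix (bE.prod bF)]
  have : LinearMap.toMatrix (bE.prod bF) (bE.prod bF)
      (LinearMap.id + (inr ℝ E F) ∘ₗ C ∘ₗ (fst ℝ E F)) =
      Matrix.fromBlocks 1 0 (LinearMap.toMatrix bE bF C) 1 := by
    ext (i|i) (j|j) <;>
      simp [LinearMap.toMatrix_apply, Matrix.fromBlocks, Module.Basis.prod_repr_inl,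
        Module.Basis.prod_repr_inr, Module.Basis.prod_apply_inl_fst, Module.Basis.prod_apply_inr_fst,
        Module.Basis.prod_apply_inl_snd, Module.Basis.prod_apply_inr_snd, Matrix.one_apply,
        Finsupp.single_apply, eq_comm]
  rw [this, Matrix.det_fromBlocks_zero₁₂]
  simp

lemma det_prodMap'' {E F : Type*} [AddCommGroup E] [Module ℝ E] [AddCommGroup F] [Module ℝ F]
    [FiniteDimensional ℝ E] [FiniteDimensional ℝ F] (A : E →ₗ[ℝ] E) (B : F →ₗ[ℝ] F) :
    LinearMap.det (A.prodMap B) = LinearMap.det A * LinearMap.det B := by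
  set bE := Module.finBasis ℝ E
  set bF := Module.finBasis ℝ F
  rw [← LinearMap.det_toMatrix (bE.prod bF), LinearMap.toMatrix_prodMap,
    Matrix.det_fromBlocks_zero₂₁, LinearMap.det_toMatrix, LinearMap.det_toMatrix]

theorem stmt16 (n : ℕ) (hn : 0 < n)
    (F : (Fin n → ℝ) → (Fin n → ℝ)) (hF : IsPolynomialMap F)
    (a b : MvPolynomial (Fin n) ℝ)
    (Φ : (Fin n → ℝ) × ℝ × ℝ → (Fin n → ℝ) × ℝ × ℝ)
    (hΦ : ∀ (x : Fin n → ℝ) (y z : ℝ),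
      Φ (x, y, z) =
        (Function.update (F x) ⟨0, hn⟩
            (F x ⟨0, hn⟩ - (y + MvPolynomial.eval x a) * (z + MvPolynomial.eval x b)),
          y + MvPolynomial.eval x a, z + MvPolynomial.eval x b)) :
    (∀ Q : (Fin n → ℝ) × ℝ × ℝ, jdet Φ Q = jdet F Q.1) ∧
    (Function.Injective Φ ↔ Function.Injective F) ∧
    (Function.Surjective Φ ↔ Function.Surjective F) ∧
    (Function.Bijective Φ ↔ Function.Bijective F) := by
  obtain ⟨p, hp⟩ := hF
  set k : Fin n := ⟨0, hn⟩ with hk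
  set e0 : Fin n → ℝ := Pi.single k 1 with he0
  set A : (Fin n → ℝ) → ℝ := fun x => MvPolynomial.eval x a with hA
  set B : (Fin n → ℝ) → ℝ := fun x => MvPolynomial.eval x b with hB
  have hupd : ∀ (v : Fin n → ℝ) (c : ℝ), Function.update v k (v k - c) = v - c • e0 := by
    intro v c; funext i
    rcases eq_or_ne i k with h | h
    · subst h; simp [he0]
    · simp [Function.update, h, he0, Pi.single_apply]
  have hΦ' : ∀ (x : Fin n → ℝ) (y z : ℝ),
      Φ (x, y, z) = (F x - ((y + A x) * (z + B x)) • e0, y + A x, z + B x) := by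
    intro x y z; rw [hΦ, hupd]
  have hFd : Differentiable ℝ F := by
    have hFeq : F = fun x i => MvPolynomial.eval x (p i) :=
      funext fun x => funext fun i => hp x i
    rw [hFeq]; exact differentiable_pi.2 fun i => mvpoly_diff (p i)
  have hAd : Differentiable ℝ A := mvpoly_diff a
  have hBd : Differentiable ℝ B := mvpoly_diff b
  -- the two factor maps
  set T : (Fin n → ℝ) × ℝ × ℝ → (Fin n → ℝ) × ℝ × ℝ :=
    fun q => (q.1 - (q.2.1 * q.2.2) • e0, q.2) with hT
  set G : (Fin n → ℝ) × ℝ × ℝ → (Fin n → ℝ) × ℝ × ℝ :=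
    fun q => (F q.1, (q.2.1 + A q.1, q.2.2 + B q.1)) with hG
  have hcomp : Φ = T ∘ G := by
    funext q; obtain ⟨x, y, z⟩ := q
    simp [hΦ', hT, hG]
  -- continuous linear projections
  set F1 : (Fin n → ℝ) × ℝ × ℝ →L[ℝ] (Fin n → ℝ) :=
    ContinuousLinearMap.fst ℝ (Fin n → ℝ) (ℝ × ℝ) with hF1
  set S1 : (Fin n → ℝ) × ℝ × ℝ →L[ℝ] ℝ × ℝ :=
    ContinuousLinearMap.snd ℝ (Fin n → ℝ) (ℝ × ℝ) with hS1
  set L21 : (Fin n → ℝ) × ℝ × ℝ →L[ℝ] ℝ := (ContinuousLinearMap.fst ℝ ℝ ℝ).comp S1 with hL21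
  set L22 : (Fin n → ℝ) × ℝ × ℝ →L[ℝ] ℝ := (ContinuousLinearMap.snd ℝ ℝ ℝ).comp S1 with hL22
  -- derivative of T at any point
  have hTd : ∀ r : (Fin n → ℝ) × ℝ × ℝ, HasFDerivAt T
      ((F1 - ((r.2.1 • L22 + r.2.2 • L21).smulRight e0)).prod S1) r := by
    intro r
    have h21 : HasFDerivAt (fun q : (Fin n → ℝ) × ℝ × ℝ => q.2.1) L21 r :=
      (hasFDerivAt_fst (p := r.2)).comp r hasFDerivAt_snd
    have h22 : HasFDerivAt (fun q : (Fin n → ℝ) × ℝ × ℝ => q.2.2) L22 r :=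
      (hasFDerivAt_snd (p := r.2)).comp r hasFDerivAt_snd
    have hmul : HasFDerivAt (fun q : (Fin n → ℝ) × ℝ × ℝ => q.2.1 * q.2.2)
        (r.2.1 • L22 + r.2.2 • L21) r := h21.mul h22
    exact ((hasFDerivAt_fst).sub (hmul.smul_const e0)).prodMk hasFDerivAt_snd
  -- derivative of G at a point
  have hGd : ∀ q : (Fin n → ℝ) × ℝ × ℝ, HasFDerivAt G
      (((fderiv ℝ F q.1).comp F1).prod
        (((L21 + (fderiv ℝ A q.1).comp F1)).prod
          ((L22 + (fderiv ℝ B q.1).comp F1)))) q := by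
    intro q
    have h21 : HasFDerivAt (fun w : (Fin n → ℝ) × ℝ × ℝ => w.2.1) L21 q :=
      (hasFDerivAt_fst (p := q.2)).comp q hasFDerivAt_snd
    have h22 : HasFDerivAt (fun w : (Fin n → ℝ) × ℝ × ℝ => w.2.2) L22 q :=
      (hasFDerivAt_snd (p := q.2)).comp q hasFDerivAt_snd
    have hF' : HasFDerivAt (fun w : (Fin n → ℝ) × ℝ × ℝ => F w.1)
        ((fderiv ℝ F q.1).comp F1) q :=
      (hFd q.1).hasFDerivAt.comp q hasFDerivAt_fst
    have hA' : HasFDerivAt (fun w : (Fin n → ℝ) × ℝ × ℝ => A w.1)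
        ((fderiv ℝ A q.1).comp F1) q :=
      (hAd q.1).hasFDerivAt.comp q hasFDerivAt_fst
    have hB' : HasFDerivAt (fun w : (Fin n → ℝ) × ℝ × ℝ => B w.1)
        ((fderiv ℝ B q.1).comp F1) q :=
      (hBd q.1).hasFDerivAt.comp q hasFDerivAt_fst
    exact hF'.prodMk ((h21.add hA').prodMk (h22.add hB'))
  have jpart : ∀ Q : (Fin n → ℝ) × ℝ × ℝ, jdet Φ Q = jdet F Q.1 := by
    intro Q
    have hΦd : HasFDerivAt Φ
        (((F1 - (((G Q).2.1 • L22 + (G Q).2.2 • L21).smulRight e0)).prod S1).comp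
          (((fderiv ℝ F Q.1).comp F1).prod
            (((L21 + (fderiv ℝ A Q.1).comp F1)).prod
              ((L22 + (fderiv ℝ B Q.1).comp F1))))) Q := by
      rw [hcomp]; exact (hTd (G Q)).comp Q (hGd Q)
    rw [jdet, hΦd.fderiv, ContinuousLinearMap.toLinearMap_comp, LinearMap.det_comp]
    have hdT : LinearMap.det
        (((F1 - (((G Q).2.1 • L22 + (G Q).2.2 • L21).smulRight e0)).prod S1 :
            (Fin n → ℝ) × ℝ × ℝ →L[ℝ] (Fin n → ℝ) × ℝ × ℝ) :
          (Fin n → ℝ) × ℝ × ℝ →ₗ[ℝ] (Fin n → ℝ) × ℝ × ℝ) = 1 := by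
      have heq : (((F1 - (((G Q).2.1 • L22 + (G Q).2.2 • L21).smulRight e0)).prod S1 :
            (Fin n → ℝ) × ℝ × ℝ →L[ℝ] (Fin n → ℝ) × ℝ × ℝ) :
          (Fin n → ℝ) × ℝ × ℝ →ₗ[ℝ] (Fin n → ℝ) × ℝ × ℝ) =
          LinearMap.id + (inl ℝ (Fin n → ℝ) (ℝ × ℝ)) ∘ₗ
            (-(((G Q).2.1 • LinearMap.snd ℝ ℝ ℝ + (G Q).2.2 • LinearMap.fst ℝ ℝ ℝ).smulRight e0))
            ∘ₗ (snd ℝ (Fin n → ℝ) (ℝ × ℝ)) := by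
        apply LinearMap.ext; rintro ⟨du, ds, dt⟩
        simp [hF1, hS1, hL21, hL22, sub_eq_add_neg]
      rw [heq, det_shear_left']
    have hdG : LinearMap.det
        ((((fderiv ℝ F Q.1).comp F1).prod
            (((L21 + (fderiv ℝ A Q.1).comp F1)).prod
              ((L22 + (fderiv ℝ B Q.1).comp F1))) :
            (Fin n → ℝ) × ℝ × ℝ →L[ℝ] (Fin n → ℝ) × ℝ × ℝ) :
          (Fin n → ℝ) × ℝ × ℝ →ₗ[ℝ] (Fin n → ℝ) × ℝ × ℝ) =
        LinearMap.det ((fderiv ℝ F Q.1 : (Fin n → ℝ) →L[ℝ] (Fin n → ℝ)) :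
          (Fin n → ℝ) →ₗ[ℝ] (Fin n → ℝ)) := by
      have heq : ((((fderiv ℝ F Q.1).comp F1).prod
            (((L21 + (fderiv ℝ A Q.1).comp F1)).prod
              ((L22 + (fderiv ℝ B Q.1).comp F1))) :
            (Fin n → ℝ) × ℝ × ℝ →L[ℝ] (Fin n → ℝ) × ℝ × ℝ) :
          (Fin n → ℝ) × ℝ × ℝ →ₗ[ℝ] (Fin n → ℝ) × ℝ × ℝ) =
          (LinearMap.prodMap
              ((fderiv ℝ F Q.1 : (Fin n → ℝ) →L[ℝ] (Fin n → ℝ)) :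
                (Fin n → ℝ) →ₗ[ℝ] (Fin n → ℝ))
              (LinearMap.id : ℝ × ℝ →ₗ[ℝ] ℝ × ℝ)) ∘ₗ
            (LinearMap.id + (inr ℝ (Fin n → ℝ) (ℝ × ℝ)) ∘ₗ
              (((fderiv ℝ A Q.1 : (Fin n → ℝ) →L[ℝ] ℝ) : (Fin n → ℝ) →ₗ[ℝ] ℝ).prod
                ((fderiv ℝ B Q.1 : (Fin n → ℝ) →L[ℝ] ℝ) : (Fin n → ℝ) →ₗ[ℝ] ℝ)) ∘ₗ
              (fst ℝ (Fin n → ℝ) (ℝ × ℝ))) := by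
        apply LinearMap.ext; rintro ⟨du, ds, dt⟩
        simp [hF1, hS1, hL21, hL22, add_comm]
      rw [heq, LinearMap.det_comp, det_prodMap'', det_shear_right', LinearMap.det_id]
      ring
    rw [hdT, hdG, one_mul, jdet]
  refine ⟨jpart, ?_, ?_, ?_⟩
  · constructor
    · intro h x x' hxx
      have e1 : Φ (x, -A x, -B x) = (F x, 0, 0) := by rw [hΦ']; simp
      have e2 : Φ (x', -A x', -B x') = (F x', 0, 0) := by rw [hΦ']; simp
      have := h (a₁ := (x, -A x, -B x)) (a₂ := (x', -A x', -B x')) (by rw [e1, e2, hxx])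
      exact congrArg Prod.fst this
    · rintro h ⟨x, y, z⟩ ⟨x', y', z'⟩ he
      rw [hΦ', hΦ'] at he
      have e1 : F x - ((y + A x) * (z + B x)) • e0
          = F x' - ((y' + A x') * (z' + B x')) • e0 := congrArg Prod.fst he
      have e2 : y + A x = y' + A x' := congrArg (fun q => q.2.1) he
      have e3 : z + B x = z' + B x' := congrArg (fun q => q.2.2) he
      rw [e2, e3] at e1
      have hFx : F x = F x' := by
        have h0 := sub_eq_sub_iff_sub_eq_sub.mp e1
        exact sub_eq_zero.mp (by simpa using h0)
      have hx : x = x' := h hFx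
      subst hx
      have hy : y = y' := by linarith
      have hz : z = z' := by linarith
      rw [hy, hz]
  · constructor
    · intro h u
      obtain ⟨⟨x, y, z⟩, hq⟩ := h (u, 0, 0)
      rw [hΦ'] at hq
      have e1 : F x - ((y + A x) * (z + B x)) • e0 = u := congrArg Prod.fst hq
      have e2 : y + A x = 0 := congrArg (fun q => q.2.1) hq
      refine ⟨x, ?_⟩
      rw [e2] at e1; simpa using e1
    · rintro h ⟨u, s, t⟩
      obtain ⟨x, hx⟩ := h (u + (s * t) • e0)
      refine ⟨(x, s - A x, t - B x), ?_⟩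
      rw [hΦ']
      simp [hx]
  · constructor
    · rintro ⟨hi, hs⟩
      refine ⟨?_, ?_⟩
      · intro x x' hxx
        have e1 : Φ (x, -A x, -B x) = (F x, 0, 0) := by rw [hΦ']; simp
        have e2 : Φ (x', -A x', -B x') = (F x', 0, 0) := by rw [hΦ']; simp
        exact congrArg Prod.fst (hi (a₁ := (x, -A x, -B x)) (a₂ := (x', -A x', -B x'))
          (by rw [e1, e2, hxx]))
      · intro u
        obtain ⟨⟨x, y, z⟩, hq⟩ := hs (u, 0, 0)
        rw [hΦ'] at hq
        have e1 : F x - ((y + A x) * (z + B x)) • e0 = u := congrArg Prod.fst hq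
        have e2 : y + A x = 0 := congrArg (fun q => q.2.1) hq
        refine ⟨x, ?_⟩
        rw [e2] at e1; simpa using e1
    · rintro ⟨hi, hs⟩
      refine ⟨?_, ?_⟩
      · rintro ⟨x, y, z⟩ ⟨x', y', z'⟩ he
        rw [hΦ', hΦ'] at he
        have e1 : F x - ((y + A x) * (z + B x)) • e0
            = F x' - ((y' + A x') * (z' + B x')) • e0 := congrArg Prod.fst he
        have e2 : y + A x = y' + A x' := congrArg (fun q => q.2.1) he
        have e3 : z + B x = z' + B x' := congrArg (fun q => q.2.2) he
        rw [e2, e3] at e1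
        have hFx : F x = F x' := by
          have h0 := sub_eq_sub_iff_sub_eq_sub.mp e1
          exact sub_eq_zero.mp (by simpa using h0)
        have hx : x = x' := hi hFx
        subst hx
        have hy : y = y' := by linarith
        have hz : z = z' := by linarith
        rw [hy, hz]
      · rintro ⟨u, s, t⟩
        obtain ⟨x, hx⟩ := hs (u + (s * t) • e0)
        refine ⟨(x, s - A x, t - B x), ?_⟩
        rw [hΦ']
        simp [hx]
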